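/- arXiv:2101.07333 — 4 statements merged into one kernel-verified Lean document; each statement's English description precedes it below -/
import Mathlib

section
/- Let U : ℝ → ℝ be a C² solution of U'' + c U' + f(U) = 0 on ℝ with U(-∞) = 1, U(+∞) = 0, 0 < U < 1, where c > 0 and f is C¹ with f(0) = f(1) = 0. Then U' ∈ L²(ℝ) and c ∫_ℝ (U'(x))² dx = ∫₀¹ f(u) du. In particular, if ∫₀¹ f > 0 then c > 0 forces ∫_ℝ (U')² = (1/c)∫₀¹ f. -/
open MeasureTheory Filter Set

/-- A bistable travelling-wave profile `U` with speed `c > 0` satisfies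
`U' ∈ L²(ℝ)` and the Rankine–Hugoniot type identity `c ∫ (U')² = ∫₀¹ f`;
in particular if `∫₀¹ f > 0` then `∫ (U')² = (1/c) ∫₀¹ f`. -/
theorem stmt1 (U f : ℝ → ℝ) (c : ℝ) (hc : 0 < c)
    (hU : ContDiff ℝ 2 U) (hf : ContDiff ℝ 1 f)
    (hode : ∀ x : ℝ, deriv (deriv U) x + c * deriv U x + f (U x) = 0)
    (hrange : ∀ x : ℝ, U x ∈ Set.Ioo (0:ℝ) 1)
    (hlim1 : Tendsto U atBot (nhds 1)) (hlim0 : Tendsto U atTop (nhds 0))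
    (hf0 : f 0 = 0) (hf1 : f 1 = 0)
    (hd1 : Tendsto (deriv U) atBot (nhds 0))
    (hd0 : Tendsto (deriv U) atTop (nhds 0))
    (hbd : ∃ M : ℝ, ∀ x, |deriv U x| ≤ M) :
    MeasureTheory.Integrable (fun x => (deriv U x) ^ 2) ∧
      c * (∫ x : ℝ, (deriv U x) ^ 2) = ∫ u in (0:ℝ)..1, f u ∧
      (0 < (∫ u in (0:ℝ)..1, f u) →
        (∫ x : ℝ, (deriv U x) ^ 2) = (1 / c) * ∫ u in (0:ℝ)..1, f u) := by
  have hfc : Continuous f := hf.continuous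
  set F : ℝ → ℝ := fun u => ∫ t in (0:ℝ)..u, f t with hFdef
  have hF : ∀ u : ℝ, HasDerivAt F (f u) u := fun u =>
    intervalIntegral.integral_hasDerivAt_right (hfc.intervalIntegrable _ _)
      hfc.stronglyMeasurable.stronglyMeasurableAtFilter hfc.continuousAt
  have hFcont : Continuous F := continuous_iff_continuousAt.2 fun u =>
    (hF u).differentiableAt.continuousAt
  have hF0 : F 0 = 0 := by simp [F]
  have hUdiff : Differentiable ℝ U := hU.differentiable two_ne_zero
  have hU2 : ContDiff ℝ 1 (deriv U) := by
    have h := (contDiff_succ_iff_deriv (n := 1)).mp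
      (by exact_mod_cast hU : ContDiff ℝ ((1 : ℕ) + 1) U)
    exact h.2.2
  have hU'diff : Differentiable ℝ (deriv U) := hU2.differentiable one_ne_zero
  have hU' : ∀ x, HasDerivAt U (deriv U x) x := fun x => (hUdiff x).hasDerivAt
  have hU'' : ∀ x, HasDerivAt (deriv U) (deriv (deriv U) x) x := fun x => (hU'diff x).hasDerivAt
  set E : ℝ → ℝ := fun x => (deriv U x) ^ 2 / 2 + F (U x) with hEdef
  set φ : ℝ → ℝ := fun x => c * (deriv U x) ^ 2 with hφdef
  have hφpos : ∀ x, 0 ≤ φ x := fun x => mul_nonneg hc.le (sq_nonneg _)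
  have hE : ∀ x, HasDerivAt (fun y => -E y) (φ x) x := by
    intro x
    have h1 : HasDerivAt (fun y => (deriv U y) ^ 2 / 2)
        (2 * (deriv U x) ^ 1 * deriv (deriv U) x / 2) x := ((hU'' x).pow 2).div_const 2
    have h2 : HasDerivAt (fun y => F (U y)) (f (U x) * deriv U x) x :=
      (hF (U x)).comp x (hU' x)
    have h3 := (h1.add h2).neg
    refine HasDerivAt.congr_deriv (f := fun y => -E y) h3 ?_
    have ho := hode x
    have hder2 : deriv (deriv U) x = -(c * deriv U x) - f (U x) := by linarith
    rw [hder2]; simp [hφdef]; ring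
  have hEtop : Tendsto (fun x => -E x) atTop (nhds 0) := by
    have h1 : Tendsto (fun x => (deriv U x) ^ 2 / 2) atTop (nhds ((0:ℝ) ^ 2 / 2)) :=
      (hd0.pow 2).div_const 2
    have h2 : Tendsto (fun x => F (U x)) atTop (nhds (F 0)) :=
      (hFcont.tendsto 0).comp hlim0
    have := (h1.add h2).neg
    have h0 : -((0:ℝ) ^ 2 / 2 + F 0) = 0 := by simp [hF0]
    exact h0 ▸ this
  have hEbot : Tendsto (fun x => -E x) atBot (nhds (-(F 1))) := by
    have h1 : Tendsto (fun x => (deriv U x) ^ 2 / 2) atBot (nhds ((0:ℝ) ^ 2 / 2)) :=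
      (hd1.pow 2).div_const 2
    have h2 : Tendsto (fun x => F (U x)) atBot (nhds (F 1)) :=
      (hFcont.tendsto 1).comp hlim1
    have := (h1.add h2).neg
    have h0 : -((0:ℝ) ^ 2 / 2 + F 1) = -(F 1) := by norm_num
    exact h0 ▸ this
  have hIoi : IntegrableOn φ (Ioi 0) :=
    integrableOn_Ioi_deriv_of_nonneg' (fun x _ => hE x) (fun x _ => hφpos x) hEtop
  -- reflection for the left half-line
  have hrefl : ∀ x, HasDerivAt (fun y => E (-y)) (φ (-x)) x := by
    intro x
    have h := ((hE (-x)).comp x (hasDerivAt_neg x)).neg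
    have heq : (fun y => -((fun y => -E y) ∘ fun y : ℝ => -y) y) = fun y => E (-y) := by
      funext y; simp [Function.comp]
    rw [show (-((fun y => -E y) ∘ Neg.neg) : ℝ → ℝ) = fun y => E (-y) from heq] at h
    refine HasDerivAt.congr_deriv h ?_; ring
  have hrefltop : Tendsto (fun y => E (-y)) atTop (nhds (F 1)) := by
    have hE' : Tendsto E atBot (nhds (F 1)) := by simpa using hEbot.neg
    exact hE'.comp tendsto_neg_atTop_atBot
  have hIoi2 : IntegrableOn (fun x => φ (-x)) (Ioi 0) :=
    integrableOn_Ioi_deriv_of_nonneg' (fun x _ => hrefl x) (fun x _ => hφpos (-x)) hrefltop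
  have hIio : IntegrableOn φ (Iio 0) := by
    have hmp : MeasurePreserving (fun x : ℝ => -x) volume volume :=
      Measure.measurePreserving_neg _
    have hemb : MeasurableEmbedding (fun x : ℝ => -x) :=
      (Homeomorph.neg ℝ).measurableEmbedding
    have hpre : (fun x : ℝ => -x) ⁻¹' (Iio 0) = Ioi 0 := by
      ext x; simp
    have h2 : IntegrableOn (φ ∘ fun x : ℝ => -x) ((fun x : ℝ => -x) ⁻¹' Iio 0) := by
      rw [hpre]; exact hIoi2
    exact (hmp.integrableOn_comp_preimage hemb).1 h2
  have hIic : IntegrableOn φ (Iic 0) :=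
    (integrableOn_Iic_iff_integrableOn_Iio).2 hIio
  have hφint : Integrable φ := by
    rw [← integrableOn_univ, ← Iic_union_Ioi (a := (0:ℝ))]
    exact hIic.union hIoi
  have hsq : Integrable (fun x => (deriv U x) ^ 2) := by
    have h := hφint.const_mul c⁻¹
    have heq : (fun x => c⁻¹ * φ x) = fun x => (deriv U x) ^ 2 := by
      funext x; simp [hφdef]; field_simp
    rwa [heq] at h
  have hint : ∫ x, φ x = F 1 := by
    have := integral_of_hasDerivAt_of_tendsto hE hφint hEbot hEtop
    rw [this]; ring
  have hmain : c * (∫ x : ℝ, (deriv U x) ^ 2) = ∫ u in (0:ℝ)..1, f u := by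
    rw [← MeasureTheory.integral_const_mul]
    exact hint
  refine ⟨hsq, hmain, fun _ => ?_⟩
  field_simp
  linarith [hmain]
end

section
/- Let δ > 0, C > 0, γ > 0, ε > 0, and let g : (T,∞) × ℝ → ℝ be a continuous nonnegative function satisfying g(t,ξ) ≤ K/(ε(t+ξ)) whenever t + ξ ≥ 1, for some constant K > 0. Suppose (q,ξ) solves the ODE system q' + δq = g(t,ξ(t)), γξ' = Cq + g(t,ξ(t)) on [T,∞) with q(T) = η > 0, ξ(T) = 0, and ξ(t) ≥ 0 for all t. If additionally ξ(t) ≤ (ln t)² on [T,T*], then there exists a constant K' > 0 (independent of η) such that for all t ∈ [T,T*]: q(t) ≤ K'/(εt) + (K'/(εT) + η) e^{-δ(t-T)/2}. -/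
open Real Set

/-- A priori bound in Lemma 4.1: for the coupled system
`q' + δq = g(t,ξ(t))`, `γξ' = Cq + g(t,ξ(t))` with decaying source
`g(t,ξ) ≤ K/(ε(t+ξ))`, as long as `ξ(t) ≤ (ln t)²` one has
`q(t) ≤ K'/(εt) + (K'/(εT) + η) e^{-δ(t-T)/2}`, with `K'` independent of `η`. -/
theorem stmt3 (δ C γ ε K T Tstar : ℝ)
    (hδ : 0 < δ) (hC : 0 < C) (hγ : 0 < γ) (hε : 0 < ε) (hK : 0 < K)
    (hT : 1 ≤ T) (hTT : T ≤ Tstar)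
    (g : ℝ → ℝ → ℝ)
    (hg_cont : Continuous fun p : ℝ × ℝ => g p.1 p.2)
    (hg_nonneg : ∀ t y, T ≤ t → 0 ≤ g t y)
    (hg_bound : ∀ t y, 1 ≤ t + y → g t y ≤ K / (ε * (t + y))) :
    ∃ K' > 0, ∀ η > 0, ∀ q ξ : ℝ → ℝ,
      (∀ t ∈ Ici T, HasDerivAt q (g t (ξ t) - δ * q t) t) →
      (∀ t ∈ Ici T, HasDerivAt ξ ((C * q t + g t (ξ t)) / γ) t) →
      q T = η → ξ T = 0 →
      (∀ t ∈ Ici T, 0 ≤ ξ t) →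
      (∀ t ∈ Icc T Tstar, ξ t ≤ (Real.log t) ^ 2) →
      ∀ t ∈ Icc T Tstar,
        q t ≤ K' / (ε * t) + (K' / (ε * T) + η) * Real.exp (-δ * (t - T) / 2) := by
  have hb : (0:ℝ) < 2/δ := by positivity
  set b : ℝ := 2/δ with hbdef
  have hbδ : b * δ = 2 := by rw [hbdef]; field_simp [hδ.ne']
  refine ⟨2*K*(1+b)/δ, by positivity, ?_⟩
  set K' : ℝ := 2*K*(1+b)/δ with hK'def
  have hK'pos : 0 < K' := by positivity
  intro η hη q ξ hq hξd hqT hξT hξ0 hξlog t ht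
  set Q : ℝ → ℝ := fun s => K'/(ε*(s+b)) + η * Real.exp (-δ*(s-T)/2) with hQ
  set D : ℝ → ℝ := fun s => K' * (-ε/(ε*(s+b))^2) + η * (Real.exp (-δ*(s-T)/2) * (-δ/2)) with hD
  have hQd : ∀ s, T ≤ s → HasDerivAt Q (D s) s := by
    intro s hs
    have hspos : 0 < s := lt_of_lt_of_le (by linarith) hs
    have h1 : HasDerivAt (fun x : ℝ => ε*(x+b)) ε s := by
      simpa using ((hasDerivAt_id s).add_const b).const_mul ε
    have hne : ε*(s+b) ≠ 0 := by positivity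
    have h2 := (h1.inv hne).const_mul K'
    have h3 : HasDerivAt (fun x : ℝ => -δ*(x-T)/2) (-δ/2) s := by
      simpa using (((hasDerivAt_id s).sub_const T).const_mul (-δ)).div_const 2
    have h4 := (h3.exp).const_mul η
    have := h2.add h4
    simpa [hQ, hD, div_eq_mul_inv, Pi.add_def] using this
  set w : ℝ → ℝ := fun s => (q s - Q s) * Real.exp (δ*s) with hw
  set Dw : ℝ → ℝ := fun s =>
      (g s (ξ s) - δ * q s - D s) * Real.exp (δ*s) + (q s - Q s) * (Real.exp (δ*s) * δ) with hDw
  have hwd : ∀ s, T ≤ s → HasDerivAt w (Dw s) s := by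
    intro s hs
    have he : HasDerivAt (fun x : ℝ => Real.exp (δ*x)) (Real.exp (δ*s) * δ) s := by
      simpa using (((hasDerivAt_id s).const_mul δ).exp)
    exact ((hq s hs).sub (hQd s hs)).mul he
  -- derivative nonpositive on (T, t)
  have hderiv_nonpos : ∀ x ∈ Ioo T t, Dw x ≤ 0 := by
    intro x hx
    have hxT : T ≤ x := hx.1.le
    have hx1 : 1 ≤ x := le_trans hT hxT
    have hxpos : 0 < x := by linarith
    have hξx : 0 ≤ ξ x := hξ0 x hxT
    have hgx : g x (ξ x) ≤ K/(ε*x) := by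
      have h1 := hg_bound x (ξ x) (by linarith)
      have h2 : K/(ε*(x + ξ x)) ≤ K/(ε*x) := by
        apply div_le_div_of_nonneg_left hK.le (by positivity)
        nlinarith
      linarith
    have hepos : 0 < Real.exp (-δ*(x-T)/2) := Real.exp_pos _
    -- key supersolution inequality
    have hkd : K' * δ = 2*K*(1+b) := by rw [hK'def]; field_simp [hδ.ne']
    have step1 : K/(ε*x) ≤ K'*δ/(2*(ε*(x+b))) := by
      rw [div_le_div_iff₀ (by positivity) (by positivity), hkd]
      nlinarith [mul_nonneg (mul_nonneg hK.le hε.le) (mul_nonneg hb.le (sub_nonneg.mpr hx1))]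
    have step2 : K'*δ/(2*(ε*(x+b))) ≤ δ*(K'/(ε*(x+b))) + K' * (-ε/(ε*(x+b))^2) := by
      have h1 : K' * (-ε/(ε*(x+b))^2) = -(K'/(ε*(x+b)^2)) := by
        rw [mul_pow]
        field_simp
      rw [h1, ← sub_nonneg]
      have hxb : 0 < x + b := by linarith
      have heq : δ*(K'/(ε*(x+b))) + -(K'/(ε*(x+b)^2)) - K'*δ/(2*(ε*(x+b)))
          = (K'/(ε*(x+b)^2)) * (δ*(x+b)/2 - 1) := by
        field_simp
        ring
      rw [heq]
      have hδxb : 0 ≤ δ*(x+b)/2 - 1 := by nlinarith [mul_pos hδ hxpos]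
      exact mul_nonneg (by positivity) hδxb
    have hkey : g x (ξ x) ≤ D x + δ * Q x := by
      have hpos : 0 ≤ (δ/2) * (η * Real.exp (-δ*(x-T)/2)) := by positivity
      calc g x (ξ x) ≤ K/(ε*x) := hgx
        _ ≤ K'*δ/(2*(ε*(x+b))) := step1
        _ ≤ δ*(K'/(ε*(x+b))) + K' * (-ε/(ε*(x+b))^2) := step2
        _ ≤ (δ*(K'/(ε*(x+b))) + K' * (-ε/(ε*(x+b))^2)) + (δ/2) * (η * Real.exp (-δ*(x-T)/2)) :=
            le_add_of_nonneg_right hpos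
        _ = D x + δ * Q x := by simp only [hD, hQ]; ring
    have hexp : 0 < Real.exp (δ*x) := Real.exp_pos _
    have : Dw x = (g x (ξ x) - D x - δ * Q x) * Real.exp (δ*x) := by
      simp only [hDw]; ring
    rw [this]
    exact mul_nonpos_of_nonpos_of_nonneg (by linarith) hexp.le
  -- antitone
  have hcont : ContinuousOn w (Icc T t) := fun s hs =>
    (hwd s hs.1).continuousAt.continuousWithinAt
  have hanti : AntitoneOn w (Icc T t) := by
    apply antitoneOn_of_deriv_nonpos (convex_Icc T t) hcont
    · intro x hx
      rw [interior_Icc] at hx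
      exact (hwd x hx.1.le).differentiableAt.differentiableWithinAt
    · intro x hx
      rw [interior_Icc] at hx
      rw [(hwd x hx.1.le).deriv]
      exact hderiv_nonpos x hx
  have htT : T ≤ t := ht.1
  have hwt : w t ≤ w T := hanti ⟨le_refl T, htT⟩ ⟨htT, le_refl t⟩ htT
  have hwT : w T ≤ 0 := by
    have : Q T = K'/(ε*(T+b)) + η := by simp [hQ]
    have hqt : q T - Q T = -(K'/(ε*(T+b))) := by rw [this, hqT]; ring
    simp only [hw, hqt]
    have h0 : 0 < K'/(ε*(T+b)) := by positivity
    exact mul_nonpos_of_nonpos_of_nonneg (by linarith) (Real.exp_pos _).le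
  have hqQ : q t ≤ Q t := by
    have h := le_trans hwt hwT
    simp only [hw] at h
    have h2 : q t - Q t ≤ 0 :=
      le_of_mul_le_mul_right (h.trans_eq (zero_mul _).symm) (Real.exp_pos (δ*t))
    linarith
  have htpos : 0 < t := by linarith
  have hfin1 : K'/(ε*(t+b)) ≤ K'/(ε*t) := by
    apply div_le_div_of_nonneg_left hK'pos.le (by positivity)
    nlinarith [hε]
  have hfin2 : η * Real.exp (-δ*(t-T)/2) ≤ (K'/(ε*T) + η) * Real.exp (-δ*(t-T)/2) := by
    have h0 : 0 < K'/(ε*T) := by positivity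
    exact mul_le_mul_of_nonneg_right (by linarith) (Real.exp_pos _).le
  simp only [hQ] at hqQ
  linarith
end

section
/- Let q, ξ : [T,∞) → ℝ solve q' + δq = h(t), γ ξ' = C q + h(t) with q(T) = η ≥ 0, ξ(T) = 0, where δ, γ, C > 0 and h ≥ 0 is continuous with h(t) ≤ A/t^{3/2} for t ≥ T ≥ 1. Then ξ is nondecreasing and bounded: there is a constant K depending on δ, γ, C, A (but not on η except linearly) with ξ(t) ≤ K(η + T^{-1/2}) for all t ≥ T. -/
open Real Set

/-- final conclusion of Lemma 4.1: with forcing `h(t) ≤ A t^{-3/2}`,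
the system `q' + δq = h`, `γ ξ' = C q + h`, `q(T) = η ≥ 0`, `ξ(T) = 0` has `ξ`
nondecreasing and bounded by `K(η + T^{-1/2})`, with `K` independent of `T, η, h`. -/
theorem stmt14 (δ γ C A : ℝ) (hδ : 0 < δ) (hγ : 0 < γ) (hC : 0 < C) (hA : 0 < A) :
    ∃ K > 0, ∀ (T η : ℝ), 1 ≤ T → 0 ≤ η → ∀ h q ξ : ℝ → ℝ,
      ContinuousOn h (Ici T) →
      (∀ t ∈ Ici T, 0 ≤ h t ∧ h t ≤ A / t ^ ((3:ℝ)/2)) →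
      (∀ t ∈ Ici T, HasDerivAt q (h t - δ * q t) t) →
      (∀ t ∈ Ici T, HasDerivAt ξ ((C * q t + h t) / γ) t) →
      q T = η → ξ T = 0 →
      MonotoneOn ξ (Ici T) ∧
        ∀ t ∈ Ici T, ξ t ≤ K * (η + T ^ (-(1:ℝ)/2)) := by
  refine ⟨(C + (C + δ) * (2 * A) + δ * γ) / (δ * γ), by positivity, ?_⟩
  intro T η hT hη h q ξ hhc hhb hq hξ hq0 hξ0
  have hT0 : (0:ℝ) < T := lt_of_lt_of_le one_pos hT
  have hqc : ContinuousOn q (Ici T) :=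
    fun t ht => (hq t ht).continuousAt.continuousWithinAt
  -- q is nonnegative on [T,∞)
  have hqnn : ∀ t ∈ Ici T, 0 ≤ q t := by
    intro t ht
    have hfd : ∀ s ∈ Ici T,
        HasDerivAt (fun s => Real.exp (δ * s) * q s) (Real.exp (δ * s) * h s) s := by
      intro s hs
      have h1 : HasDerivAt (fun s => Real.exp (δ * s)) (Real.exp (δ * s) * δ) s := by
        simpa [mul_comm] using (((hasDerivAt_id s).const_mul δ).exp)
      have h2 : HasDerivAt (fun s => Real.exp (δ * s) * q s) _ s := h1.mul (hq s hs)
      convert h2 using 1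
      ring
    have hmono : MonotoneOn (fun s => Real.exp (δ * s) * q s) (Ici T) := by
      apply monotoneOn_of_deriv_nonneg (convex_Ici T)
      · exact fun s hs => (hfd s hs).continuousAt.continuousWithinAt
      · rw [interior_Ici]
        exact fun s hs => (hfd s (mem_Ici.mpr (le_of_lt hs))).differentiableAt.differentiableWithinAt
      · rw [interior_Ici]
        intro s hs
        rw [(hfd s (mem_Ici.mpr (le_of_lt hs))).deriv]
        have := (hhb s (mem_Ici.mpr (le_of_lt hs))).1
        positivity
    have hle := hmono self_mem_Ici ht ht
    simp only [hq0] at hle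
    have h0 : (0:ℝ) ≤ Real.exp (δ * t) * q t :=
      le_trans (mul_nonneg (Real.exp_pos _).le hη) hle
    nlinarith [Real.exp_pos (δ * t)]
  -- ξ is monotone
  have hmonoξ : MonotoneOn ξ (Ici T) := by
    apply monotoneOn_of_deriv_nonneg (convex_Ici T)
    · exact fun s hs => (hξ s hs).continuousAt.continuousWithinAt
    · rw [interior_Ici]
      exact fun s hs => (hξ s (mem_Ici.mpr (le_of_lt hs))).differentiableAt.differentiableWithinAt
    · rw [interior_Ici]
      intro s hs
      rw [(hξ s (mem_Ici.mpr (le_of_lt hs))).deriv]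
      have h1 := (hhb s (mem_Ici.mpr (le_of_lt hs))).1
      have h2 := hqnn s (mem_Ici.mpr (le_of_lt hs))
      positivity
  refine ⟨hmonoξ, ?_⟩
  intro t ht
  have htT : T ≤ t := ht
  have hIcc : Icc T t ⊆ Ici T := Icc_subset_Ici_self
  have huIcc : uIcc T t = Icc T t := uIcc_of_le htT
  have hhcs : ContinuousOn h (uIcc T t) := hhc.mono (by rw [huIcc]; exact hIcc)
  have hqcs : ContinuousOn q (uIcc T t) := hqc.mono (by rw [huIcc]; exact hIcc)
  have hh_int : IntervalIntegrable h MeasureTheory.volume T t := hhcs.intervalIntegrable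
  have hq_int : IntervalIntegrable q MeasureTheory.volume T t := hqcs.intervalIntegrable
  set Ih := ∫ s in T..t, h s with hIhdef
  set Iq := ∫ s in T..t, q s with hIqdef
  set P := T ^ (-(1:ℝ)/2) with hPdef
  have hP : 0 < P := Real.rpow_pos_of_pos hT0 _
  -- fundamental theorem for q
  have hq_eq : (∫ s in T..t, (h s - δ * q s)) = q t - η := by
    rw [← hq0]
    apply intervalIntegral.integral_eq_sub_of_hasDerivAt
    · intro s hs
      exact hq s (hIcc (huIcc ▸ hs))
    · exact hh_int.sub (hq_int.const_mul δ)
  have hsplit2 : (∫ s in T..t, (h s - δ * q s)) = Ih - δ * Iq := by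
    rw [intervalIntegral.integral_sub hh_int (hq_int.const_mul δ),
      intervalIntegral.integral_const_mul]
  -- fundamental theorem for ξ
  have hξ_eq : (∫ s in T..t, (C * q s + h s) / γ) = ξ t := by
    have := intervalIntegral.integral_eq_sub_of_hasDerivAt
      (f := ξ) (f' := fun s => (C * q s + h s) / γ) (a := T) (b := t)
      (fun s hs => hξ s (hIcc (huIcc ▸ hs)))
      (((hq_int.const_mul C).add hh_int).div_const γ)
    rw [this, hξ0, sub_zero]
  have hsplit : (∫ s in T..t, (C * q s + h s) / γ) = (C * Iq + Ih) / γ := by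
    rw [intervalIntegral.integral_div,
      intervalIntegral.integral_add (hq_int.const_mul C) hh_int,
      intervalIntegral.integral_const_mul]
  have hγξ : γ * ξ t = C * Iq + Ih := by
    rw [← hξ_eq, hsplit]
    field_simp
  -- bound on Ih
  have hIhnn : 0 ≤ Ih :=
    intervalIntegral.integral_nonneg htT (fun s hs => (hhb s (hIcc hs)).1)
  have hpow_cont : ContinuousOn (fun s : ℝ => A * s ^ (-(3:ℝ)/2)) (uIcc T t) := by
    apply continuousOn_const.mul
    apply ContinuousOn.rpow_const continuousOn_id
    intro x hx
    rw [huIcc, mem_Icc] at hx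
    exact Or.inl (by simp only [id]; linarith)
  have hpow_int : IntervalIntegrable (fun s : ℝ => A * s ^ (-(3:ℝ)/2))
      MeasureTheory.volume T t := hpow_cont.intervalIntegrable
  have hIh_le1 : Ih ≤ ∫ s in T..t, A * s ^ (-(3:ℝ)/2) := by
    apply intervalIntegral.integral_mono_on htT hh_int hpow_int
    intro s hs
    rw [mem_Icc] at hs
    have hs0 : (0:ℝ) < s := lt_of_lt_of_le hT0 hs.1
    have hle := (hhb s (mem_Ici.mpr hs.1)).2
    rw [div_eq_mul_inv, ← Real.rpow_neg hs0.le] at hle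
    calc h s ≤ A * s ^ (-((3:ℝ)/2)) := hle
      _ = A * s ^ (-(3:ℝ)/2) := by norm_num
  have hzero_notmem : (0:ℝ) ∉ uIcc T t := by
    intro hmem
    rw [huIcc, mem_Icc] at hmem
    linarith [hmem.1]
  have hcalc : (∫ s in T..t, A * s ^ (-(3:ℝ)/2))
      = A * ((t ^ (-(1:ℝ)/2) - P) / (-(1:ℝ)/2)) := by
    rw [intervalIntegral.integral_const_mul,
      integral_rpow (Or.inr ⟨by norm_num, hzero_notmem⟩), hPdef]
    norm_num
  have htP : (0:ℝ) ≤ t ^ (-(1:ℝ)/2) :=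
    Real.rpow_nonneg (le_trans hT0.le htT) _
  have hIh : Ih ≤ 2 * A * P := by
    rw [hcalc] at hIh_le1
    nlinarith [hIh_le1]
  -- bound on Iq
  have hIq : δ * Iq ≤ η + Ih := by
    have hqt := hqnn t ht
    rw [hsplit2] at hq_eq
    linarith
  -- conclude
  have hξt : ξ t * (δ * γ) = δ * (C * Iq + Ih) := by
    rw [← hγξ]; ring
  rw [div_mul_eq_mul_div, le_div_iff₀ (by positivity : (0:ℝ) < δ * γ)]
  nlinarith [mul_le_mul_of_nonneg_left hIq hC.le,
    mul_le_mul_of_nonneg_left hIh (by positivity : (0:ℝ) ≤ C + δ),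
    mul_nonneg hC.le hP.le, mul_nonneg (mul_pos hδ hγ).le hη,
    mul_nonneg (mul_pos hδ hγ).le hP.le,
    mul_nonneg (by positivity : (0:ℝ) ≤ (C + δ) * (2 * A)) hη,
    mul_nonneg hδ.le hIhnn]
end

section
/- Fix δ > 0. Define, for η > 0 and T ≥ 1, the solution (q,ξ) of the linear system q' + (δ/4) q = φ(t) ξ(t), ξ' = β q, with q(T) = ξ(T) = 1, where β > 0 and φ is continuous with 0 ≤ φ(t) ≤ ε/(1+t). Then q(t) ≤ e^{-δ(t-T)/4} + C ε ξ(t)/(1+t) for all t ≥ T, where C depends only on δ (using that ξ is nondecreasing and ∫_T^t e^{-δ(t-s)/4}/(1+s) ds ≤ C/(1+t)). -/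
open Real Set

lemma aux1 (a T t : ℝ) (ha : 0 < a) (hT : 1 ≤ T) (ht : T ≤ t) :
    1/(1+t) + (2/a)/(1+t)^2 ≤ (2/a)*a/(1+t)
      + ((2*Real.exp 1*(1+1/a)/a)/(1+T)) * ((a/2) * Real.exp (-(a/2)*(t-T))) := by
  have hs2 : (2:ℝ) ≤ 1 + t := by linarith
  have hs0 : (0:ℝ) < 1 + t := by linarith
  have hT0 : (0:ℝ) < 1 + T := by linarith
  have hsT : 1 + T ≤ 1 + t := by linarith
  have hE0 : 0 < Real.exp (-(a/2)*(t-T)) := Real.exp_pos _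
  have he0 : 0 < Real.exp 1 := Real.exp_pos _
  by_cases h : 2 ≤ a * (1 + t)
  · have h1 : (2/a)/(1+t)^2 ≤ 1/(1+t) := by
      rw [div_le_div_iff₀ (by positivity) hs0]
      have : 2/a ≤ 1 + t := by
        rw [div_le_iff₀ ha]; nlinarith
      nlinarith
    have h2 : (2/a)*a/(1+t) = 2/(1+t) := by field_simp
    have h3 : 0 ≤ ((2*Real.exp 1*(1+1/a)/a)/(1+T)) * ((a/2) * Real.exp (-(a/2)*(t-T))) := by
      positivity
    rw [h2]
    have : 1/(1+t) + 1/(1+t) = 2/(1+t) := by ring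
    linarith
  · push_neg at h
    have hu0 : 0 ≤ t - T := by linarith
    have hau : a * (t - T) < 2 := by nlinarith
    have hEe : (Real.exp 1)⁻¹ ≤ Real.exp (-(a/2)*(t-T)) := by
      rw [← Real.exp_neg]
      apply Real.exp_le_exp.2
      nlinarith
    have key : ((2*Real.exp 1*(1+1/a)/a)/(1+T)) * ((a/2) * (Real.exp 1)⁻¹) = (1+1/a)/(1+T) := by
      field_simp
    have hstep : ((2*Real.exp 1*(1+1/a)/a)/(1+T)) * ((a/2) * (Real.exp 1)⁻¹)
        ≤ ((2*Real.exp 1*(1+1/a)/a)/(1+T)) * ((a/2) * Real.exp (-(a/2)*(t-T))) := by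
      gcongr
      try positivity
    have h1 : 1/(1+t) ≤ 1/(1+T) := one_div_le_one_div_of_le hT0 hsT
    have h2 : (2/a)/(1+t)^2 ≤ (1/a) * (1/(1+T)) := by
      rw [div_le_iff₀ (by positivity : (0:ℝ) < (1+t)^2)]
      have hfact : 2*(1+T) ≤ (1+t)^2 := by nlinarith
      calc 2/a = 1/a * (1/(1+T)) * (2*(1+T)) := by field_simp
        _ ≤ 1/a * (1/(1+T)) * (1+t)^2 := by gcongr
    have h3 : (1+1/a)/(1+T) = 1/(1+T) + (1/a)*(1/(1+T)) := by ring
    have h4 : 0 ≤ (2/a)*a/(1+t) := by positivity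
    linarith [key ▸ hstep]

lemma aux2 (a M T u : ℝ) (ha : 0 < a) (hM : 0 ≤ M) (hT : 1 ≤ T) (hu : 0 ≤ u) :
    (M/(1+T))*(Real.exp (-(a/2)*u) - Real.exp (-a*u)) ≤ M*(1+4/a)/(1+T+u) := by
  set E := Real.exp (-(a/2)*u) with hEdef
  have hE0 : 0 < E := Real.exp_pos _
  have hE1 : E ≤ 1 := Real.exp_le_one_iff.2 (by nlinarith)
  have hEsq : Real.exp (-a*u) = E^2 := by
    have h : (-(a/2)*u) + (-(a/2)*u) = -a*u := by ring
    rw [hEdef, sq, ← Real.exp_add, h]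
  have hT0 : (0:ℝ) < 1 + T := by linarith
  have hs0 : (0:ℝ) < 1 + T + u := by linarith
  have h1E : 1 - E ≤ a*u/2 := by
    have := Real.add_one_le_exp (-(a/2)*u)
    nlinarith [Real.exp_pos (-(a/2)*u)]
  have h1E0 : 0 ≤ 1 - E := by linarith
  have husq : a^2 * u^2 * E ≤ 16 := by
    have h2 : a*u/4 + 1 ≤ Real.exp (a*u/4) := Real.add_one_le_exp _
    have h4 : Real.exp (a*u/2) = (Real.exp (a*u/4))^2 := by
      rw [sq, ← Real.exp_add]; ring_nf
    have h3 : (a*u/4)^2 ≤ Real.exp (a*u/2) := by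
      rw [h4]
      nlinarith [Real.exp_pos (a*u/4), mul_nonneg (mul_nonneg ha.le hu) (by norm_num : (0:ℝ) ≤ 1/4)]
    have h5 : E * Real.exp (a*u/2) = 1 := by
      rw [hEdef, ← Real.exp_add]; ring_nf; exact Real.exp_zero
    nlinarith [hE0.le, h3, h5]
  rw [hEsq, div_mul_eq_mul_div, div_le_div_iff₀ hT0 hs0]
  have hB : M*(E*(1-E))*(1+T) ≤ M*(1+T) := by nlinarith [mul_nonneg hM hT0.le]
  have hC0 : E*(1-E)*u ≤ 8/a := by
    have h6 : E*(1-E)*u ≤ E*(a*u/2)*u := by nlinarith [mul_nonneg hE0.le hu, mul_nonneg (mul_nonneg hE0.le hu) hu]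
    have h7 : a * (E*(a*u/2)*u) = (a^2*u^2*E)/2 := by ring
    rw [le_div_iff₀ ha]
    nlinarith
  have hC : M*(E*(1-E))*u ≤ M*(8/a) := by
    have := mul_le_mul_of_nonneg_left hC0 hM
    nlinarith
  have hD : M*(8/a) ≤ M*(4/a)*(1+T) := by
    have h8 : (0:ℝ) ≤ M*(4/a) := by positivity
    calc M*(8/a) = M*(4/a)*2 := by ring
      _ ≤ M*(4/a)*(1+T) := mul_le_mul_of_nonneg_left (show (2:ℝ) ≤ 1+T by linarith) h8
  nlinarith [hB, hC, hD]

lemma stmt17_mono {A B : ℝ} {f f' : ℝ → ℝ} (h : ∀ t ∈ Icc A B, HasDerivAt f (f' t) t)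
    (h' : ∀ t ∈ Ioo A B, 0 ≤ f' t) : MonotoneOn f (Icc A B) := by
  apply monotoneOn_of_deriv_nonneg (convex_Icc A B)
  · exact fun t ht => (h t ht).continuousAt.continuousWithinAt
  · intro t ht
    rw [interior_Icc] at ht
    exact (h t (Ioo_subset_Icc_self ht)).differentiableAt.differentiableWithinAt
  · intro t ht
    rw [interior_Icc] at ht
    rw [(h t (Ioo_subset_Icc_self ht)).deriv]
    exact h' t ht

lemma stmt17_monoIci {A : ℝ} {f f' : ℝ → ℝ} (h : ∀ t ∈ Ici A, HasDerivAt f (f' t) t)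
    (h' : ∀ t ∈ Ioi A, 0 ≤ f' t) : MonotoneOn f (Ici A) := by
  apply monotoneOn_of_deriv_nonneg (convex_Ici A)
  · exact fun t ht => (h t ht).continuousAt.continuousWithinAt
  · intro t ht
    rw [interior_Ici] at ht
    exact (h t (mem_Ici.2 (le_of_lt (mem_Ioi.1 ht)))).differentiableAt.differentiableWithinAt
  · intro t ht
    rw [interior_Ici] at ht
    rw [(h t (mem_Ici.2 (le_of_lt (mem_Ioi.1 ht)))).deriv]
    exact h' t ht

lemma stmt17_antiIci {A : ℝ} {f f' : ℝ → ℝ} (h : ∀ t ∈ Ici A, HasDerivAt f (f' t) t)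
    (h' : ∀ t ∈ Ioi A, f' t ≤ 0) : AntitoneOn f (Ici A) := by
  apply antitoneOn_of_deriv_nonpos (convex_Ici A)
  · exact fun t ht => (h t ht).continuousAt.continuousWithinAt
  · intro t ht
    rw [interior_Ici] at ht
    exact (h t (mem_Ici.2 (le_of_lt (mem_Ioi.1 ht)))).differentiableAt.differentiableWithinAt
  · intro t ht
    rw [interior_Ici] at ht
    rw [(h t (mem_Ici.2 (le_of_lt (mem_Ioi.1 ht)))).deriv]
    exact h' t ht

lemma stmt17_expDeriv (c T t : ℝ) :
    HasDerivAt (fun s : ℝ => Real.exp (c*(s-T))) (c * Real.exp (c*(t-T))) t := by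
  have h : HasDerivAt (fun s : ℝ => c*(s-T)) c t := by
    simpa using ((hasDerivAt_id t).sub_const T).const_mul c
  have := h.exp
  rwa [mul_comm] at this

lemma stmt17_expDeriv2 (c t : ℝ) :
    HasDerivAt (fun s : ℝ => Real.exp (c*s)) (c * Real.exp (c*t)) t := by
  have h : HasDerivAt (fun s : ℝ => c*s) c t := by
    simpa using (hasDerivAt_id t).const_mul c
  have := h.exp
  rwa [mul_comm] at this

lemma stmt17_invDeriv (K t : ℝ) (h1t : (1:ℝ) + t ≠ 0) :
    HasDerivAt (fun s : ℝ => K/(1+s)) (-K/(1+t)^2) t := by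
  have h0 : HasDerivAt (fun s : ℝ => 1+s) 1 t := by
    simpa using (hasDerivAt_id t).const_add 1
  have h1 : HasDerivAt (fun s : ℝ => (1+s)⁻¹) (-1/(1+t)^2) t := by
    have := h0.fun_inv h1t
    convert this using 1
    try ring
  have h2 := h1.const_mul K
  have h4 : K * (-1/(1+t)^2) = -K/(1+t)^2 := by ring
  rw [h4] at h2
  have h6 : (fun s : ℝ => K/(1+s)) = fun s => K * (1+s)⁻¹ :=
    funext fun s => div_eq_mul_inv K _
  rw [h6]
  exact h2

/-- the core estimate of system (3.10): for the linear system
`q' + (δ/4) q = φ(t) ξ(t)`, `ξ' = β q`, with `q(T) = ξ(T) = 1` and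
`0 ≤ φ(t) ≤ ε/(1+t)`, one has `q(t) ≤ e^{-δ(t-T)/4} + Cε ξ(t)/(1+t)`,
with `C` depending only on `δ`. -/
theorem stmt17 (δ : ℝ) (hδ : 0 < δ) :
    ∃ C > 0, ∀ (β ε T : ℝ), 0 < β → 0 < ε → 1 ≤ T →
      ∀ φ q ξ : ℝ → ℝ,
      ContinuousOn φ (Ici T) →
      (∀ t ∈ Ici T, 0 ≤ φ t ∧ φ t ≤ ε / (1 + t)) →
      (∀ t ∈ Ici T, HasDerivAt q (φ t * ξ t - (δ / 4) * q t) t) →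
      (∀ t ∈ Ici T, HasDerivAt ξ (β * q t) t) →
      q T = 1 → ξ T = 1 →
      ∀ t ∈ Ici T,
        q t ≤ Real.exp (-δ * (t - T) / 4) + C * ε * ξ t / (1 + t) := by
  have ha : 0 < δ / 4 := by linarith
  refine ⟨2/(δ/4) + (2*Real.exp 1*(1+1/(δ/4))/(δ/4))*(1+4/(δ/4)), by positivity, ?_⟩
  intro β ε T hβ hε hT φ q ξ hφc hφb hq hξ hqT hξT
  set a := δ / 4 with ha4
  set K := 2/a with hK
  set M := 2*Real.exp 1*(1+1/a)/a with hM
  clear_value a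
  clear_value K M
  have hK0 : 0 < K := by rw [hK]; positivity
  have hM0 : 0 < M := by rw [hM]; positivity
  have hT0 : (0:ℝ) < 1 + T := by linarith
  -- positivity of q on [T, ∞)
  have hqpos : ∀ t ∈ Ici T, 0 < q t := by
    by_contra hcon
    push_neg at hcon
    obtain ⟨t1, ht1, hq1⟩ := hcon
    have hqc : ContinuousOn q (Icc T t1) :=
      fun t ht => ((hq t ht.1).continuousAt).continuousWithinAt
    set S := Icc T t1 ∩ q ⁻¹' (Iic 0) with hS
    have hSne : S.Nonempty := ⟨t1, ⟨ht1, le_refl t1⟩, hq1⟩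
    have hScl : IsClosed S := hqc.preimage_isClosed_of_isClosed isClosed_Icc isClosed_Iic
    have hSbd : BddBelow S := ⟨T, fun x hx => hx.1.1⟩
    set t0 := sInf S with ht0
    have ht0S : t0 ∈ S := hScl.csInf_mem hSne hSbd
    have ht0T : T ≤ t0 := ht0S.1.1
    have hqt0 : q t0 ≤ 0 := ht0S.2
    have hpos : ∀ t ∈ Ico T t0, 0 < q t := by
      intro t ht
      by_contra hnp
      push_neg at hnp
      have htS : t ∈ S := ⟨⟨ht.1, le_trans ht.2.le ht0S.1.2⟩, hnp⟩
      exact absurd (csInf_le hSbd htS) (not_le.2 ht.2)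
    have hsub : Icc T t0 ⊆ Ici T := fun x hx => hx.1
    have hξmono : MonotoneOn ξ (Icc T t0) :=
      stmt17_mono (fun t ht => hξ t (hsub ht))
        (fun t ht => mul_nonneg hβ.le (hpos t ⟨ht.1.le, ht.2⟩).le)
    have hξ1 : ∀ t ∈ Icc T t0, 1 ≤ ξ t := by
      intro t ht
      have := hξmono ⟨le_refl T, ht0T⟩ ht ht.1
      rw [hξT] at this
      exact this
    set g := fun t => q t * Real.exp (a * t) with hg
    have hgd : ∀ t ∈ Icc T t0, HasDerivAt g (φ t * ξ t * Real.exp (a*t)) t := by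
      intro t ht
      have h1 := hq t (hsub ht)
      have h2 := stmt17_expDeriv2 a t
      have h3 := h1.fun_mul h2
      rw [hg]
      exact h3.congr_deriv (by ring)
    have hgm : MonotoneOn g (Icc T t0) := by
      apply stmt17_mono hgd
      intro t ht
      have ht' : t ∈ Icc T t0 := Ioo_subset_Icc_self ht
      exact mul_nonneg (mul_nonneg (hφb t (hsub ht')).1
        (by linarith [hξ1 t ht'])) (Real.exp_pos _).le
    have hcmp := hgm ⟨le_refl T, ht0T⟩ ⟨ht0T, le_refl t0⟩ ht0T
    have hgT : g T = Real.exp (a*T) := by simp [hg, hqT]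
    have hgt0 : g t0 ≤ 0 := by
      simp only [hg]
      exact mul_nonpos_of_nonpos_of_nonneg hqt0 (Real.exp_pos _).le
    have := Real.exp_pos (a*T)
    rw [hgT] at hcmp
    linarith
  -- ξ monotone and ≥ 1 on [T, ∞)
  have hξmono : MonotoneOn ξ (Ici T) :=
    stmt17_monoIci hξ (fun t ht => mul_nonneg hβ.le (hqpos t (mem_Ici.2 (le_of_lt (mem_Ioi.1 ht)))).le)
  have hξ1 : ∀ t ∈ Ici T, 1 ≤ ξ t := by
    intro t ht
    have := hξmono self_mem_Ici ht ht
    rw [hξT] at this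
    exact this
  -- the barrier function ψ
  set ψ := fun t => K/(1+t) + (M/(1+T)) * (Real.exp (-(a/2)*(t-T)) - Real.exp (-a*(t-T))) with hψ
  set ψd := fun t => -K/(1+t)^2
      + (M/(1+T)) * (-(a/2)*Real.exp (-(a/2)*(t-T)) + a*Real.exp (-a*(t-T))) with hψd
  clear_value ψ ψd
  have hψder : ∀ t ∈ Ici T, HasDerivAt ψ (ψd t) t := by
    intro t ht
    have h1t : (1:ℝ) + t ≠ 0 := by
      have : (1:ℝ) ≤ t := le_trans hT ht
      positivity
    have hd1 := stmt17_invDeriv K t h1t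
    have hd2 := stmt17_expDeriv (-(a/2)) T t
    have hd3 := stmt17_expDeriv (-a) T t
    have h4 := hd1.add ((hd2.sub hd3).const_mul (M/(1+T)))
    simp only [hψ, hψd]
    exact h4.congr_deriv (by ring)
  have hψ0 : ∀ t ∈ Ici T, 0 ≤ ψ t := by
    intro t ht
    have h1t : (0:ℝ) < 1 + t := by linarith [le_trans hT ht]
    have hEle : Real.exp (-a*(t-T)) ≤ Real.exp (-(a/2)*(t-T)) := by
      apply Real.exp_le_exp.2
      nlinarith [sub_nonneg.2 (mem_Ici.1 ht)]
    have hg1 : 0 ≤ K/(1+t) := by positivity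
    have hg2 : 0 ≤ M/(1+T) := by positivity
    simp only [hψ]
    nlinarith
  have hψC : ∀ t ∈ Ici T, ψ t ≤ (K + M*(1+4/a))/(1+t) := by
    intro t ht
    have h1 := aux2 a M T (t-T) ha hM0.le hT (sub_nonneg.2 (mem_Ici.1 ht))
    have h2 : 1+T+(t-T) = 1+t := by ring
    rw [h2] at h1
    have h1t : (0:ℝ) < 1 + t := by linarith [le_trans hT ht]
    have h3 : (K + M*(1+4/a))/(1+t) = K/(1+t) + M*(1+4/a)/(1+t) := by ring
    rw [h3]
    simp only [hψ]
    linarith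
  have hψkey : ∀ t ∈ Ici T, 1/(1+t) ≤ ψd t + a * ψ t := by
    intro t ht
    have h1 := aux1 a T t ha hT (mem_Ici.1 ht)
    rw [← hK, ← hM] at h1
    have h2 : ψd t + a * ψ t = K*a/(1+t) - K/(1+t)^2
        + (M/(1+T)) * ((a/2) * Real.exp (-(a/2)*(t-T))) := by
      simp only [hψd, hψ]
      ring
    rw [h2]
    linarith [h1]
  -- the comparison function V
  set V := fun t => (q t - ε * (ξ t * ψ t)) * Real.exp (a * (t - T)) with hV
  set Vd := fun t => ((φ t * ξ t - a * q t) - ε * ((β * q t) * ψ t + ξ t * ψd t)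
      + a * (q t - ε * (ξ t * ψ t))) * Real.exp (a*(t-T)) with hVd
  clear_value V Vd
  have hVder : ∀ t ∈ Ici T, HasDerivAt V (Vd t) t := by
    intro t ht
    have h1 := hq t ht
    have h2 := hξ t ht
    have h3 := hψder t ht
    have hv : HasDerivAt (fun s => q s - ε * (ξ s * ψ s))
        ((φ t * ξ t - a * q t) - ε * ((β * q t) * ψ t + ξ t * ψd t)) t :=
      h1.sub ((h2.mul h3).const_mul ε)
    have hE := stmt17_expDeriv a T t
    have h5 := hv.mul hE
    simp only [hV, hVd]
    exact h5.congr_deriv (by ring)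
  have hVnonpos : ∀ t ∈ Ioi T, Vd t ≤ 0 := by
    intro t ht
    have ht' : t ∈ Ici T := mem_Ici.2 (le_of_lt (mem_Ioi.1 ht))
    have h1t : (0:ℝ) < 1 + t := by linarith [le_trans hT ht']
    have hφ0 := (hφb t ht').1
    have hφle := (hφb t ht').2
    have hξt := hξ1 t ht'
    have hb1 : φ t * ξ t ≤ ε * ξ t * (1/(1+t)) := by
      have h5 : φ t ≤ ε * (1/(1+t)) := by
        rw [mul_one_div]
        exact hφle
      nlinarith
    have hb2 : ε * ξ t * (1/(1+t)) ≤ ε * ξ t * (ψd t + a * ψ t) := by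
      apply mul_le_mul_of_nonneg_left (hψkey t ht')
      nlinarith
    have hb3 : 0 ≤ ε * (β * q t * ψ t) :=
      mul_nonneg hε.le (mul_nonneg (mul_nonneg hβ.le (hqpos t ht').le) (hψ0 t ht'))
    have hbracket : (φ t * ξ t - a * q t) - ε * ((β * q t) * ψ t + ξ t * ψd t)
        + a * (q t - ε * (ξ t * ψ t))
        = (φ t * ξ t - ε * ξ t * (ψd t + a * ψ t)) - ε * (β * q t * ψ t) := by ring
    have hE0 := Real.exp_pos (a*(t-T))
    simp only [hVd]
    rw [hbracket]
    apply mul_nonpos_of_nonpos_of_nonneg _ hE0.le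
    linarith
  have hVanti : AntitoneOn V (Ici T) := stmt17_antiIci hVder hVnonpos
  -- conclusion
  intro t ht
  have hle := hVanti self_mem_Ici ht (mem_Ici.1 ht)
  have hVT : (q T - ε * (ξ T * ψ T)) * Real.exp (a*(T-T)) ≤ 1 := by
    have hψT0 : 0 ≤ ψ T := hψ0 T self_mem_Ici
    simp only [sub_self, mul_zero, Real.exp_zero, mul_one, hqT, hξT, one_mul]
    nlinarith [mul_nonneg hε.le hψT0]
  have h3 : (q t - ε * (ξ t * ψ t)) * Real.exp (a*(t-T)) ≤ 1 := by
    simp only [hV] at hle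
    linarith [hle, hVT]
  have h4 : q t - ε * (ξ t * ψ t) ≤ Real.exp (-(a*(t-T))) := by
    calc q t - ε * (ξ t * ψ t)
        = ((q t - ε * (ξ t * ψ t)) * Real.exp (a*(t-T))) * Real.exp (-(a*(t-T))) := by
          rw [mul_assoc, ← Real.exp_add]
          simp
      _ ≤ 1 * Real.exp (-(a*(t-T))) :=
          mul_le_mul_of_nonneg_right h3 (Real.exp_pos _).le
      _ = Real.exp (-(a*(t-T))) := one_mul _
  have h1t : (0:ℝ) < 1 + t := by linarith [le_trans hT (mem_Ici.1 ht)]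
  have hexp_eq : Real.exp (-δ * (t - T) / 4) = Real.exp (-(a*(t-T))) := by
    congr 1
    rw [ha4]
    ring
  have h5 : ε * (ξ t * ψ t) ≤ ε * (ξ t * ((K + M*(1+4/a))/(1+t))) := by
    apply mul_le_mul_of_nonneg_left _ hε.le
    apply mul_le_mul_of_nonneg_left (hψC t ht)
    linarith [hξ1 t ht]
  have h6 : ε * (ξ t * ((K + M*(1+4/a))/(1+t))) = (K + M*(1+4/a)) * ε * ξ t / (1+t) := by
    ring
  rw [hexp_eq]
  linarith [h4, h5, h6]
end
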